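/- Let β > 0 and machine energies 0 = ℰ_0 ≤ ⋯ ≤ ℰ_{d_M−1} = ℰ_max with Gibbs state τ_M = τ(β,ℰ). For every density matrix ρ on ℂ^{d_S}, the eigenvalue vector of A^n(ρ) majorizes that of A^m(ρ) whenever n ≥ m ≥ 1, and the sequence of vectors of diagonal entries of A^n(ρ) converges in ℝ^{d_S} as n → ∞. -/

import Mathlib

open Filter Topology Kronecker Matrix
open scoped ComplexOrder

/-- Sum of the `k` largest entries of a real vector (maximum of all `k`-element subset sums). -/
noncomputable def sumKLargest {ι : Type*} [Fintype ι] (v : ι → ℝ) (k : ℕ) : ℝ :=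
  sSup {x : ℝ | ∃ s : Finset ι, s.card = k ∧ ∑ i ∈ s, v i = x}

/-- `IsMajorizedBy x y` means `x ≺ y`: same total sum, and for every `k = 1,…,n` the
sum of the `k` largest entries of `x` is at most that of `y`. -/
def IsMajorizedBy {ι : Type*} [Fintype ι] (x y : ι → ℝ) : Prop :=
  (∑ i, x i = ∑ i, y i) ∧
  ∀ k : ℕ, 1 ≤ k → k ≤ Fintype.card ι → sumKLargest x k ≤ sumKLargest y k

/-- The decreasing rearrangement of a real vector. -/
noncomputable def sortDesc {n : ℕ} (v : Fin n → ℝ) : Fin n → ℝ :=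
  fun i => v (Tuple.sort v i.rev)

/-- The geometric probability vector `p*(g,d)` with entries `g^i / ∑_j g^j`. -/
noncomputable def pstar (g : ℝ) (d : ℕ) : Fin d → ℝ :=
  fun i => g ^ (i : ℕ) / ∑ j : Fin d, g ^ (j : ℕ)

/-- The Gibbs probability vector at inverse temperature `β` for energies `E`. -/
noncomputable def gibbsVec {m : ℕ} (β : ℝ) (E : Fin m → ℝ) : Fin m → ℝ :=
  fun j => Real.exp (-(β * E j)) / ∑ k : Fin m, Real.exp (-(β * E k))

/-- The Gibbs state: diagonal density matrix with the Gibbs vector on the diagonal. -/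
noncomputable def gibbsState {m : ℕ} (β : ℝ) (E : Fin m → ℝ) : Matrix (Fin m) (Fin m) ℂ :=
  Matrix.diagonal fun j => (gibbsVec β E j : ℂ)

/-- The eigenvalues of a Hermitian matrix (junk value `0` if not Hermitian). -/
noncomputable def eigVec {ι : Type*} [Fintype ι] [DecidableEq ι] (ρ : Matrix ι ι ℂ) : ι → ℝ := by
  classical exact if h : ρ.IsHermitian then h.eigenvalues else 0

/-- The eigenvalue vector of a Hermitian matrix, listed in decreasing order. -/
noncomputable def eigVecDesc {d : ℕ} (ρ : Matrix (Fin d) (Fin d) ℂ) : Fin d → ℝ :=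
  sortDesc (eigVec ρ)

/-- Partial trace over the machine: `(Tr_M X)_{s,s'} = ∑_m X_{(s,m),(s',m)}`. -/
noncomputable def ptraceM {dS dM : ℕ}
    (X : Matrix (Fin dS × Fin dM) (Fin dS × Fin dM) ℂ) : Matrix (Fin dS) (Fin dS) ℂ :=
  Matrix.of fun s s' => ∑ m : Fin dM, X (s, m) (s', m)

/-- The coherent operation `Λ_U(ρ) = Tr_M (U (ρ ⊗ τ_M) U†)` where `τ_M` is the diagonal
machine state with diagonal `τ`. -/
noncomputable def coherentOp {dS dM : ℕ} (τ : Fin dM → ℝ)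
    (U : Matrix (Fin dS × Fin dM) (Fin dS × Fin dM) ℂ)
    (ρ : Matrix (Fin dS) (Fin dS) ℂ) : Matrix (Fin dS) (Fin dS) ℂ :=
  ptraceM (U * (ρ ⊗ₖ Matrix.diagonal fun j => (τ j : ℂ)) * Uᴴ)

/-- `Λ_{U_n} ∘ ⋯ ∘ Λ_{U_1} (ρ)`: the machine is reset to its Gibbs state before each cycle. -/
noncomputable def coherentSeq {dS dM : ℕ} (τ : Fin dM → ℝ) {n : ℕ}
    (U : Fin n → Matrix (Fin dS × Fin dM) (Fin dS × Fin dM) ℂ)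
    (ρ : Matrix (Fin dS) (Fin dS) ℂ) : Matrix (Fin dS) (Fin dS) ℂ :=
  (List.ofFn U).foldl (fun σ V => coherentOp τ V σ) ρ

/-- The optimal coherent operation `A`: the diagonal matrix whose `i`-th diagonal entry is
`∑_{j<d_M} λ_{i·d_M+j}` where `λ` is the decreasing list of eigenvalues of `ρ ⊗ τ_M`. -/
noncomputable def Aopt {dS dM : ℕ} (τ : Fin dM → ℝ)
    (ρ : Matrix (Fin dS) (Fin dS) ℂ) : Matrix (Fin dS) (Fin dS) ℂ :=
  Matrix.diagonal fun i : Fin dS =>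
    ((∑ j : Fin dM,
      sortDesc
        (fun k : Fin (dS * dM) =>
          eigVec (ρ ⊗ₖ Matrix.diagonal fun l => (τ l : ℂ)) (finProdFinEquiv.symm k))
        ⟨(i : ℕ) * dM + (j : ℕ), by
          calc (i : ℕ) * dM + (j : ℕ) < (i : ℕ) * dM + dM := by
                exact Nat.add_lt_add_left j.isLt _
            _ = ((i : ℕ) + 1) * dM := by ring
            _ ≤ dS * dM := Nat.mul_le_mul_right dM i.isLt⟩ : ℝ) : ℂ)

/-- `Δ_i(p) = a·p_i − b·p_{i−1}` for `i ≥ 1` (and `0` for `i = 0`). -/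
noncomputable def delta (a b : ℝ) {d : ℕ} (p : Fin d → ℝ) (i : Fin d) : ℝ :=
  if (i : ℕ) = 0 then 0
  else a * p i - b * p ⟨(i : ℕ) - 1, Nat.lt_of_le_of_lt (Nat.sub_le _ _) i.isLt⟩

/-- The max-swap map `B`: if some `Δ_i(p) > 0`, pick an index `k̄` maximizing `Δ`,
move `Δ_{k̄}(p)` of population from level `k̄` to level `k̄−1`, and rearrange decreasingly;
otherwise `p` is left unchanged. -/
noncomputable def maxSwap (a b : ℝ) {d : ℕ} (p : Fin d → ℝ) : Fin d → ℝ := by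
  classical
  exact
    if h : ∃ k : Fin d, 0 < delta a b p k ∧ ∀ i, delta a b p i ≤ delta a b p k then
      sortDesc (fun i =>
        if i = h.choose then p h.choose - delta a b p h.choose
        else if (i : ℕ) = (h.choose : ℕ) - 1 then p i + delta a b p h.choose
        else p i)
    else p

section Helpers
open Polynomial



lemma sumKLargest_bddAbove {ι : Type*} [Fintype ι] (v : ι → ℝ) (k : ℕ) :
    BddAbove {x : ℝ | ∃ s : Finset ι, s.card = k ∧ ∑ i ∈ s, v i = x} := by
  apply Set.Finite.bddAbove
  apply Set.Finite.subset (Set.finite_range (fun s : Finset ι => ∑ i ∈ s, v i))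
  rintro x ⟨s, -, rfl⟩
  exact ⟨s, rfl⟩

lemma le_sumKLargest {ι : Type*} [Fintype ι] (v : ι → ℝ) (s : Finset ι) :
    ∑ i ∈ s, v i ≤ sumKLargest v s.card :=
  le_csSup (sumKLargest_bddAbove v _) ⟨s, rfl, rfl⟩

lemma sumKLargest_le {ι : Type*} [Fintype ι] (v : ι → ℝ) {k : ℕ} (hk : k ≤ Fintype.card ι)
    {B : ℝ} (hB : ∀ s : Finset ι, s.card = k → ∑ i ∈ s, v i ≤ B) :
    sumKLargest v k ≤ B := by
  apply csSup_le
  · obtain ⟨t, -, ht⟩ := Finset.exists_subset_card_eq (s := (Finset.univ : Finset ι)) (n := k)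
      (by simpa using hk)
    exact ⟨_, ⟨t, ht, rfl⟩⟩
  · rintro x ⟨s, hs, rfl⟩
    exact hB s hs

lemma sumKLargest_comp_equiv {ι κ : Type*} [Fintype ι] [Fintype κ] (v : ι → ℝ) (e : κ ≃ ι)
    (k : ℕ) : sumKLargest (v ∘ e) k = sumKLargest v k := by
  unfold sumKLargest
  congr 1
  ext x
  constructor
  · rintro ⟨s, hs, rfl⟩
    exact ⟨s.map e.toEmbedding, by simp [hs], by simp [Finset.sum_map]⟩
  · rintro ⟨s, hs, rfl⟩
    refine ⟨s.map e.symm.toEmbedding, by simp [hs], ?_⟩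
    simp [Finset.sum_map]



lemma fin_strictMono_le {k d : ℕ} {f : Fin k → Fin d} (hf : StrictMono f) :
    ∀ m (h : m < k), m ≤ (f ⟨m, h⟩ : ℕ) := by
  intro m
  induction m with
  | zero => intro h; exact Nat.zero_le _
  | succ m ih =>
    intro h
    have h1 : m < k := Nat.lt_of_succ_lt h
    have h2 : f ⟨m, h1⟩ < f ⟨m + 1, h⟩ := hf (by simp [Fin.lt_def])
    have := ih h1
    have h3 : (f ⟨m, h1⟩ : ℕ) < (f ⟨m+1, h⟩ : ℕ) := h2
    omega

lemma sum_le_prefix {d k : ℕ} (hk : k ≤ d) (v : Fin d → ℝ) (hv : Antitone v)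
    (s : Finset (Fin d)) (hs : s.card = k) :
    ∑ i ∈ s, v i ≤ ∑ j : Fin k, v (Fin.castLE hk j) := by
  have hmem : ∀ j, s.orderEmbOfFin hs j ∈ s := fun j => Finset.orderEmbOfFin_mem s hs j
  have hsub : Finset.univ.map (s.orderEmbOfFin hs).toEmbedding ⊆ s := by
    intro x hx
    simp only [Finset.mem_map] at hx
    obtain ⟨j, -, rfl⟩ := hx
    exact hmem j
  have hcard : s = Finset.univ.map (s.orderEmbOfFin hs).toEmbedding := by
    refine (Finset.eq_of_subset_of_card_le hsub ?_).symm
    simp [hs]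
  rw [hcard, Finset.sum_map]
  apply Finset.sum_le_sum
  intro j _
  apply hv
  rw [Fin.le_def]
  exact fin_strictMono_le (s.orderEmbOfFin hs).strictMono j j.2




lemma sumKLargest_of_antitone {d k : ℕ} (hk : k ≤ d) (v : Fin d → ℝ) (hv : Antitone v) :
    sumKLargest v k = ∑ j : Fin k, v (Fin.castLE hk j) := by
  apply le_antisymm
  · exact sumKLargest_le v (by simpa using hk) (fun s hs => sum_le_prefix hk v hv s hs)
  · have : ∑ j : Fin k, v (Fin.castLE hk j)
        = ∑ i ∈ Finset.univ.map (Fin.castLEEmb hk), v i := by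
      rw [Finset.sum_map]; rfl
    rw [this]
    have hcard : (Finset.univ.map (Fin.castLEEmb hk)).card = k := by simp
    simpa [hcard] using le_sumKLargest v (Finset.univ.map (Fin.castLEEmb hk))

lemma sortDesc_antitone {n : ℕ} (v : Fin n → ℝ) : Antitone (sortDesc v) := by
  have h1 : Monotone (v ∘ Tuple.sort v) := Tuple.monotone_sort v
  intro a b hab
  exact h1 (by simpa [Fin.rev_le_rev] using hab)

lemma sortDesc_perm {n : ℕ} (v : Fin n → ℝ) :
    ∃ e : Equiv.Perm (Fin n), sortDesc v = v ∘ e :=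
  ⟨Fin.revPerm.trans (Tuple.sort v), rfl⟩

lemma antitone_comp_perm_eq {n : ℕ} {f : Fin n → ℝ} (hf : Antitone f)
    {e : Equiv.Perm (Fin n)} (hfe : Antitone (f ∘ e)) : f ∘ e = f := by
  have h1 : Monotone (f ∘ (Fin.revPerm.trans e : Equiv.Perm (Fin n))) := by
    intro a b hab
    exact hfe (show b.rev ≤ a.rev by simpa [Fin.rev_le_rev] using hab)
  have h2 : Monotone (f ∘ (Fin.revPerm : Equiv.Perm (Fin n))) := by
    intro a b hab
    exact hf (show b.rev ≤ a.rev by simpa [Fin.rev_le_rev] using hab)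
  have h3 := Tuple.unique_monotone h1 h2
  funext i
  have := congrFun h3 i.rev
  simpa [Fin.rev_rev] using this

lemma sortDesc_eq_of_antitone {n : ℕ} {p v : Fin n → ℝ} (hp : Antitone p)
    (h : ∃ e : Equiv.Perm (Fin n), v = p ∘ e) : sortDesc v = p := by
  obtain ⟨e, rfl⟩ := h
  obtain ⟨e', he'⟩ := sortDesc_perm (p ∘ e)
  have : sortDesc (p ∘ e) = p ∘ (e'.trans e : Equiv.Perm (Fin n)) := he'
  have ha := sortDesc_antitone (p ∘ e)
  rw [this] at ha
  rw [this]
  exact antitone_comp_perm_eq hp ha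


lemma exists_comp_perm {ι α : Type*} [Fintype ι] (f g : ι → α)
    (h : Multiset.map f Finset.univ.val = Multiset.map g Finset.univ.val) :
    ∃ e : Equiv.Perm ι, f = g ∘ e := by
  classical
  have hcard : ∀ c : α, Fintype.card {a // f a = c} = Fintype.card {b // g b = c} := by
    intro c
    simp only [Fintype.card_subtype]
    have h1 := congrArg (Multiset.count c) h
    rw [Multiset.count_map, Multiset.count_map] at h1
    simpa [Finset.filter, eq_comm] using h1
  refine ⟨Equiv.ofFiberEquiv (f := f) (g := g) (fun c => Fintype.equivOfCardEq (hcard c)),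
    funext fun a => ?_⟩
  exact (Equiv.ofFiberEquiv_map (fun c => Fintype.equivOfCardEq (hcard c)) a).symm



lemma charpoly_diagonal {ι : Type*} [Fintype ι] [DecidableEq ι] (d : ι → ℂ) :
    (Matrix.diagonal d).charpoly = ∏ i, (X - C (d i)) := by
  rw [Matrix.charpoly, show (Matrix.diagonal d).charmatrix
      = Matrix.diagonal fun i => (X : ℂ[X]) - C (d i) from ?_, Matrix.det_diagonal]
  ext i j
  by_cases hij : i = j
  · subst hij; simp [Matrix.charmatrix_apply_eq]
  · simp [Matrix.charmatrix_apply_ne _ _ _ hij, Matrix.diagonal_apply_ne _ hij]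

lemma charpoly_unitary_conj {ι : Type*} [Fintype ι] [DecidableEq ι]
    (U D : Matrix ι ι ℂ) (hU : U ∈ Matrix.unitaryGroup ι ℂ) :
    (U * D * star U).charpoly = D.charpoly := by
  have hUV : U * star U = 1 := Matrix.mem_unitaryGroup_iff.mp hU
  have hmap : ∀ A B : Matrix ι ι ℂ, (C : ℂ →+* ℂ[X]).mapMatrix (A * B)
      = (C : ℂ →+* ℂ[X]).mapMatrix A * (C : ℂ →+* ℂ[X]).mapMatrix B := fun A B => map_mul _ A B
  have key : (U * D * star U).charmatrix
      = (C : ℂ →+* ℂ[X]).mapMatrix U * D.charmatrix * (C : ℂ →+* ℂ[X]).mapMatrix (star U) := by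
    unfold Matrix.charmatrix
    rw [mul_sub, sub_mul, ← hmap, ← hmap]
    congr 1
    have hc : Commute (Matrix.scalar ι (X : ℂ[X])) ((C : ℂ →+* ℂ[X]).mapMatrix U) :=
      Matrix.scalar_commute _ (fun r => Commute.all _ r) _
    rw [← hc.eq, mul_assoc, ← hmap, hUV]
    simp
  rw [Matrix.charpoly, Matrix.charpoly, key, Matrix.det_mul, Matrix.det_mul]
  have : ((C : ℂ →+* ℂ[X]).mapMatrix U).det * ((C : ℂ →+* ℂ[X]).mapMatrix (star U)).det = 1 := by
    rw [← Matrix.det_mul, ← hmap, hUV]; simp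
  rw [mul_right_comm, this, one_mul]

lemma eigVec_eq {ι : Type*} [Fintype ι] [DecidableEq ι] {A : Matrix ι ι ℂ}
    (hA : A.IsHermitian) : eigVec A = hA.eigenvalues := by
  unfold eigVec; rw [dif_pos hA]

lemma charpoly_eq_prod_eigVec {ι : Type*} [Fintype ι] [DecidableEq ι] {A : Matrix ι ι ℂ}
    (hA : A.IsHermitian) : A.charpoly = ∏ i, (X - C ((eigVec A i : ℂ))) := by
  have h1 := hA.spectral_theorem
  have h2 : A.charpoly = (Matrix.diagonal (RCLike.ofReal ∘ hA.eigenvalues)).charpoly := by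
    conv_lhs => rw [h1]
    exact charpoly_unitary_conj _ _ (hA.eigenvectorUnitary).2
  rw [h2, _root_.charpoly_diagonal, eigVec_eq hA]
  rfl

lemma eigVec_diagonal_perm {ι : Type*} [Fintype ι] [DecidableEq ι] (w : ι → ℝ) :
    ∃ e : Equiv.Perm ι, eigVec (Matrix.diagonal fun i => (w i : ℂ)) = w ∘ e := by
  have hH : (Matrix.diagonal fun i => (w i : ℂ)).IsHermitian := by
    rw [Matrix.isHermitian_diagonal_iff]
    intro i
    exact Complex.conj_ofReal (w i)
  have h1 := charpoly_eq_prod_eigVec hH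
  have h2 := _root_.charpoly_diagonal (fun i => (w i : ℂ))
  have key : Multiset.map (fun i => ((eigVec (Matrix.diagonal fun i => (w i : ℂ)) i : ℝ) : ℂ))
        Finset.univ.val
      = Multiset.map (fun i => ((w i : ℝ) : ℂ)) Finset.univ.val := by
    have h3 : (Multiset.map (fun a : ℂ => X - C a)
        (Multiset.map (fun i => ((eigVec (Matrix.diagonal fun i => (w i : ℂ)) i : ℝ) : ℂ))
          Finset.univ.val)).prod
        = (Multiset.map (fun a : ℂ => X - C a)
          (Multiset.map (fun i => ((w i : ℝ) : ℂ)) Finset.univ.val)).prod := by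
      rw [Multiset.map_map, Multiset.map_map]
      have h4 := h1.symm.trans h2
      rw [Finset.prod_eq_multiset_prod, Finset.prod_eq_multiset_prod] at h4
      convert h4 using 2 <;> rfl
    have := congrArg Polynomial.roots h3
    rwa [Polynomial.roots_multiset_prod_X_sub_C, Polynomial.roots_multiset_prod_X_sub_C] at this
  have key2 : Multiset.map (eigVec (Matrix.diagonal fun i => (w i : ℂ))) Finset.univ.val
      = Multiset.map w Finset.univ.val := by
    apply Multiset.map_injective (f := (Complex.ofReal : ℝ → ℂ)) Complex.ofReal_injective
    rw [Multiset.map_map, Multiset.map_map]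
    exact key
  exact exists_comp_perm _ _ key2

lemma sum_eigVec_eq_trace {ι : Type*} [Fintype ι] [DecidableEq ι] {A : Matrix ι ι ℂ}
    (hA : A.IsHermitian) : ((∑ i, eigVec A i : ℝ) : ℂ) = A.trace := by
  have h1 := hA.spectral_theorem
  have hUV : (hA.eigenvectorUnitary : Matrix ι ι ℂ) * star (hA.eigenvectorUnitary : Matrix ι ι ℂ)
      = 1 := Matrix.mem_unitaryGroup_iff.mp (hA.eigenvectorUnitary).2
  conv_rhs => rw [h1]
  rw [Unitary.conjStarAlgAut_apply]
  rw [Matrix.trace_mul_cycle]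
  rw [show star (hA.eigenvectorUnitary : Matrix ι ι ℂ) * (hA.eigenvectorUnitary : Matrix ι ι ℂ)
      = 1 from Matrix.mem_unitaryGroup_iff'.mp (hA.eigenvectorUnitary).2, one_mul,
    Matrix.trace_diagonal, eigVec_eq hA]
  push_cast
  rfl


lemma kron_conjTranspose {m n : Type*} [Fintype m] [Fintype n] (A : Matrix m m ℂ)
    (B : Matrix n n ℂ) : (A ⊗ₖ B)ᴴ = Aᴴ ⊗ₖ Bᴴ := by
  ext i j
  simp [Matrix.conjTranspose_apply, Matrix.kroneckerMap_apply, mul_comm]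

lemma posSemidef_kron {m n : Type*} [Fintype m] [Fintype n] [DecidableEq m] [DecidableEq n]
    {A : Matrix m m ℂ} {B : Matrix n n ℂ} (hA : A.PosSemidef) (hB : B.PosSemidef) :
    (A ⊗ₖ B).PosSemidef := by
  exact hA.kronecker hB





section core
variable {dS dM : ℕ}

/-- index of the `(i,j)` entry in `Fin (dS * dM)`. -/
lemma idx_lt (i : Fin dS) (j : Fin dM) : (i : ℕ) * dM + (j : ℕ) < dS * dM :=
  calc (i : ℕ) * dM + (j : ℕ) < (i : ℕ) * dM + dM := Nat.add_lt_add_left j.isLt _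
    _ = ((i : ℕ) + 1) * dM := by ring
    _ ≤ dS * dM := Nat.mul_le_mul_right dM i.isLt

noncomputable def wvec (τ : Fin dM → ℝ) (σ : Matrix (Fin dS) (Fin dS) ℂ) :
    Fin (dS * dM) → ℝ :=
  sortDesc (fun k => eigVec (σ ⊗ₖ Matrix.diagonal fun l => (τ l : ℂ)) (finProdFinEquiv.symm k))

noncomputable def qvec (τ : Fin dM → ℝ) (σ : Matrix (Fin dS) (Fin dS) ℂ) : Fin dS → ℝ :=
  fun i => ∑ j : Fin dM, wvec τ σ ⟨(i : ℕ) * dM + (j : ℕ), idx_lt i j⟩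

lemma idx_eq_equiv (i : Fin dS) (j : Fin dM) :
    (⟨(i : ℕ) * dM + (j : ℕ), idx_lt i j⟩ : Fin (dS * dM)) = finProdFinEquiv (i, j) := by
  apply Fin.ext
  show (i : ℕ) * dM + (j : ℕ) = (j : ℕ) + dM * (i : ℕ)
  ring

lemma wvec_facts (τ : Fin dM → ℝ) (hτ0 : ∀ j, 0 ≤ τ j) (hτ1 : ∑ j, τ j = 1)
    (σ : Matrix (Fin dS) (Fin dS) ℂ) (hσ : σ.PosSemidef) (hσtr : σ.trace = 1) :
    Antitone (wvec τ σ) ∧ (∀ t, 0 ≤ wvec τ σ t) ∧ ∑ t, wvec τ σ t = 1 := by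
  classical
  set D := (Matrix.diagonal fun l => (τ l : ℂ)) with hD
  have hDpsd : D.PosSemidef := by
    rw [hD, Matrix.posSemidef_diagonal_iff]
    intro l
    exact_mod_cast hτ0 l
  have hK : (σ ⊗ₖ D).PosSemidef := posSemidef_kron hσ hDpsd
  set u : Fin (dS * dM) → ℝ := fun k => eigVec (σ ⊗ₖ D) (finProdFinEquiv.symm k) with hu
  have hw : wvec τ σ = sortDesc u := rfl
  have hun : ∀ t, 0 ≤ u t := by
    intro t
    rw [hu]
    simp only
    rw [eigVec_eq hK.1]
    exact hK.eigenvalues_nonneg _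
  obtain ⟨e₀, he₀⟩ := sortDesc_perm u
  refine ⟨hw ▸ sortDesc_antitone u, ?_, ?_⟩
  · intro t
    rw [hw, he₀]
    exact hun _
  · have hsum_u : ∑ t, u t = ∑ x, eigVec (σ ⊗ₖ D) x := by
      rw [hu]
      exact Equiv.sum_comp finProdFinEquiv.symm _
    have htr : (σ ⊗ₖ D).trace = 1 := by
      rw [Matrix.trace_kronecker, hσtr, hD, Matrix.trace_diagonal, one_mul]
      rw [← Complex.ofReal_sum, hτ1, Complex.ofReal_one]
    have : ((∑ t, wvec τ σ t : ℝ) : ℂ) = 1 := by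
      rw [hw, he₀]
      rw [show ∑ t, (u ∘ e₀) t = ∑ t, u t from Equiv.sum_comp e₀ u, hsum_u,
        sum_eigVec_eq_trace hK.1, htr]
    exact_mod_cast this
end core

section core2
variable {dS dM : ℕ}

lemma qvec_facts (τ : Fin dM → ℝ) (hτ0 : ∀ j, 0 ≤ τ j) (hτ1 : ∑ j, τ j = 1)
    (σ : Matrix (Fin dS) (Fin dS) ℂ) (hσ : σ.PosSemidef) (hσtr : σ.trace = 1) :
    Antitone (qvec τ σ) ∧ (∀ i, 0 ≤ qvec τ σ i) ∧ ∑ i, qvec τ σ i = 1 := by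
  obtain ⟨hwa, hwn, hws⟩ := wvec_facts τ hτ0 hτ1 σ hσ hσtr
  refine ⟨?_, ?_, ?_⟩
  · intro a b hab
    apply Finset.sum_le_sum
    intro j _
    apply hwa
    rw [Fin.le_def]
    exact Nat.add_le_add_right (Nat.mul_le_mul_right dM hab) _
  · intro i
    exact Finset.sum_nonneg fun j _ => hwn _
  · have : ∑ i, qvec τ σ i = ∑ x : Fin dS × Fin dM, wvec τ σ (finProdFinEquiv x) := by
      rw [Fintype.sum_prod_type]
      apply Finset.sum_congr rfl
      intro i _
      apply Finset.sum_congr rfl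
      intro j _
      rw [idx_eq_equiv]
    rw [this, Equiv.sum_comp finProdFinEquiv (wvec τ σ), hws]

lemma qvec_prefix (τ : Fin dM → ℝ) (hτ0 : ∀ j, 0 ≤ τ j) (hτ1 : ∑ j, τ j = 1)
    (p : Fin dS → ℝ) (hp : Antitone p) {k : ℕ} (hk : k ≤ dS) :
    ∑ j : Fin k, p (Fin.castLE hk j)
      ≤ ∑ j : Fin k, qvec τ (Matrix.diagonal fun i => (p i : ℂ)) (Fin.castLE hk j) := by
  classical
  set σ : Matrix (Fin dS) (Fin dS) ℂ := Matrix.diagonal fun i => (p i : ℂ) with hσdef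
  set D := (Matrix.diagonal fun l => (τ l : ℂ)) with hD
  have hmul : k * dM ≤ dS * dM := Nat.mul_le_mul_right dM hk
  set u : Fin (dS * dM) → ℝ := fun t => eigVec (σ ⊗ₖ D) (finProdFinEquiv.symm t) with hu
  have hw : wvec τ σ = sortDesc u := rfl
  obtain ⟨e₀, he₀⟩ := sortDesc_perm u
  -- the eigenvalues of σ ⊗ D as a permutation of products
  have hkron : σ ⊗ₖ D = Matrix.diagonal fun x : Fin dS × Fin dM => ((p x.1 * τ x.2 : ℝ) : ℂ) := by
    rw [hσdef, hD, Matrix.diagonal_kronecker_diagonal]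
    congr 1
    funext x
    push_cast
    ring
  set f : Fin dS × Fin dM → ℝ := fun x => p x.1 * τ x.2 with hf
  obtain ⟨e₂, he₂⟩ : ∃ e : Equiv.Perm (Fin dS × Fin dM), eigVec (σ ⊗ₖ D) = f ∘ e := by
    rw [hkron]; exact eigVec_diagonal_perm f
  -- RHS equals sumKLargest of w at k * dM
  have hrhs : ∑ j : Fin k, qvec τ σ (Fin.castLE hk j) = sumKLargest (wvec τ σ) (k * dM) := by
    have h1 : ∑ j : Fin k, qvec τ σ (Fin.castLE hk j)
        = ∑ x : Fin k × Fin dM, wvec τ σ (Fin.castLE hmul (finProdFinEquiv x)) := by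
      rw [Fintype.sum_prod_type]
      apply Finset.sum_congr rfl
      intro i _
      unfold qvec
      apply Finset.sum_congr rfl
      intro j _
      congr 1
      apply Fin.ext
      show ((Fin.castLE hk i : Fin dS) : ℕ) * dM + (j : ℕ)
        = ((finProdFinEquiv (i, j) : Fin (k * dM)) : ℕ)
      show (i : ℕ) * dM + (j : ℕ) = (j : ℕ) + dM * (i : ℕ)
      ring
    have h2 : ∑ x : Fin k × Fin dM, wvec τ σ (Fin.castLE hmul (finProdFinEquiv x))
        = ∑ t : Fin (k * dM), wvec τ σ (Fin.castLE hmul t) :=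
      Equiv.sum_comp finProdFinEquiv (fun t => wvec τ σ (Fin.castLE hmul t))
    rw [h1, h2, sumKLargest_of_antitone hmul _ (hw ▸ sortDesc_antitone u)]
  have hperm : sumKLargest (wvec τ σ) (k * dM) = sumKLargest f (k * dM) := by
    rw [hw, he₀, sumKLargest_comp_equiv u e₀,
      show u = (eigVec (σ ⊗ₖ D)) ∘ (finProdFinEquiv.symm) from rfl,
      sumKLargest_comp_equiv _ finProdFinEquiv.symm, he₂, sumKLargest_comp_equiv f e₂]
  have hlhs : ∑ j : Fin k, p (Fin.castLE hk j) ≤ sumKLargest f (k * dM) := by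
    have hinj : Function.Injective (fun x : Fin k × Fin dM => ((Fin.castLE hk x.1, x.2) :
        Fin dS × Fin dM)) := by
      intro a b hab
      simp only [Prod.mk.injEq] at hab
      exact Prod.ext (Fin.castLE_injective hk hab.1) hab.2
    set T : Finset (Fin dS × Fin dM) := Finset.univ.map ⟨_, hinj⟩ with hT
    have hcard : T.card = k * dM := by
      rw [hT, Finset.card_map, Finset.card_univ, Fintype.card_prod, Fintype.card_fin,
        Fintype.card_fin]
    have hsumT : ∑ x ∈ T, f x = ∑ j : Fin k, p (Fin.castLE hk j) := by
      rw [hT, Finset.sum_map]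
      show ∑ x : Fin k × Fin dM, f (Fin.castLE hk x.1, x.2) = _
      simp only [hf, Fintype.sum_prod_type, ← Finset.mul_sum, hτ1, mul_one]
    have := le_sumKLargest f T
    rw [hcard, hsumT] at this
    exact this
  calc ∑ j : Fin k, p (Fin.castLE hk j) ≤ sumKLargest f (k * dM) := hlhs
    _ = sumKLargest (wvec τ σ) (k * dM) := hperm.symm
    _ = ∑ j : Fin k, qvec τ σ (Fin.castLE hk j) := hrhs.symm
end core2

end Helpers

/-- Monotonicity and convergence of the optimal coherent protocol:
`A^n(ρ)` majorizes `A^m(ρ)` for `n ≥ m ≥ 1`, and the vectors of diagonal entries of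
`A^n(ρ)` converge as `n → ∞`. -/
theorem optimal_protocol_converges {dS dM : ℕ} (hdM : 0 < dM)
    (β : ℝ) (hβ : 0 < β)
    (E : Fin dM → ℝ) (hmono : Monotone E) (hE0 : E ⟨0, hdM⟩ = 0)
    (ρ : Matrix (Fin dS) (Fin dS) ℂ) (hρ : ρ.PosSemidef) (hρtr : ρ.trace = 1) :
    (∀ m n : ℕ, 1 ≤ m → m ≤ n →
      IsMajorizedBy (eigVecDesc ((Aopt (gibbsVec β E))^[m] ρ))
        (eigVecDesc ((Aopt (gibbsVec β E))^[n] ρ))) ∧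
    ∃ L : Fin dS → ℝ,
      Filter.Tendsto (fun n : ℕ => fun i : Fin dS => (((Aopt (gibbsVec β E))^[n] ρ) i i).re)
        Filter.atTop (nhds L) := by
  classical
  set τ : Fin dM → ℝ := gibbsVec β E with hτdef
  have hZpos : 0 < ∑ k : Fin dM, Real.exp (-(β * E k)) := by
    have : Nonempty (Fin dM) := ⟨⟨0, hdM⟩⟩
    exact Finset.sum_pos (fun k _ => Real.exp_pos _) Finset.univ_nonempty
  have hτ0 : ∀ j, 0 ≤ τ j := fun j =>
    div_nonneg (Real.exp_pos _).le hZpos.le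
  have hτ1 : ∑ j, τ j = 1 := by
    rw [hτdef]
    unfold gibbsVec
    rw [← Finset.sum_div, div_self hZpos.ne']
  -- Aopt is diagonal with entries qvec
  have hAopt : ∀ σ : Matrix (Fin dS) (Fin dS) ℂ,
      Aopt τ σ = Matrix.diagonal fun i => ((qvec τ σ i : ℝ) : ℂ) := fun σ => rfl
  set P : ℕ → (Fin dS → ℝ) := fun n => qvec τ ((Aopt τ)^[n] ρ) with hPdef
  have key : ∀ n : ℕ, ((Aopt τ)^[n + 1] ρ = Matrix.diagonal fun i => ((P n i : ℝ) : ℂ))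
      ∧ Antitone (P n) ∧ (∀ i, 0 ≤ P n i) ∧ (∑ i, P n i = 1) := by
    intro n
    induction n with
    | zero =>
      have h0 : (Aopt τ)^[0 + 1] ρ = Aopt τ ρ := by
        rw [Function.iterate_one]
      have hP0 : P 0 = qvec τ ρ := by rw [hPdef]; simp
      obtain ⟨ha, hn, hs⟩ := qvec_facts τ hτ0 hτ1 ρ hρ hρtr
      refine ⟨?_, ?_, ?_, ?_⟩
      · rw [h0, hAopt, hP0]
      · rw [hP0]; exact ha
      · rw [hP0]; exact hn
      · rw [hP0]; exact hs
    | succ n ih =>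
      obtain ⟨hdiag, ha, hn, hs⟩ := ih
      have hσpsd : (Matrix.diagonal fun i => ((P n i : ℝ) : ℂ)).PosSemidef := by
        rw [Matrix.posSemidef_diagonal_iff]
        intro i
        exact_mod_cast hn i
      have hσtr : (Matrix.diagonal fun i => ((P n i : ℝ) : ℂ)).trace = 1 := by
        rw [Matrix.trace_diagonal, ← Complex.ofReal_sum, hs, Complex.ofReal_one]
      have hstep : (Aopt τ)^[n + 1 + 1] ρ = Aopt τ ((Aopt τ)^[n + 1] ρ) :=
        Function.iterate_succ_apply' _ _ _
      have hPn1 : P (n + 1) = qvec τ (Matrix.diagonal fun i => ((P n i : ℝ) : ℂ)) := by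
        rw [hPdef]
        simp only
        rw [hdiag]
      obtain ⟨ha', hn', hs'⟩ := qvec_facts τ hτ0 hτ1 _ hσpsd hσtr
      refine ⟨?_, ?_, ?_, ?_⟩
      · rw [hstep, hdiag, hAopt, ← hPn1]
      · rw [hPn1]; exact ha'
      · rw [hPn1]; exact hn'
      · rw [hPn1]; exact hs'
  -- prefix sums increase at each step
  have hstep : ∀ (n : ℕ) (k : ℕ) (hk : k ≤ dS),
      ∑ j : Fin k, P n (Fin.castLE hk j) ≤ ∑ j : Fin k, P (n + 1) (Fin.castLE hk j) := by
    intro n k hk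
    have h1 := qvec_prefix τ hτ0 hτ1 (P n) (key n).2.1 hk
    have hPn1 : P (n + 1) = qvec τ (Matrix.diagonal fun i => ((P n i : ℝ) : ℂ)) := by
      rw [hPdef]
      simp only
      rw [(key n).1]
    rw [hPn1]
    exact h1
  have hmono2 : ∀ (k : ℕ) (hk : k ≤ dS), Monotone (fun n => ∑ j : Fin k, P n (Fin.castLE hk j)) :=
    fun k hk => monotone_nat_of_le_succ (fun n => hstep n k hk)
  -- identification of eigVecDesc
  have hdesc : ∀ n : ℕ, eigVecDesc ((Aopt τ)^[n + 1] ρ) = P n := by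
    intro n
    rw [(key n).1]
    exact sortDesc_eq_of_antitone (key n).2.1 (eigVec_diagonal_perm (P n))
  constructor
  · -- majorization
    intro m n hm hmn
    obtain ⟨m', rfl⟩ : ∃ m', m = m' + 1 := ⟨m - 1, (Nat.succ_pred_eq_of_pos hm).symm⟩
    obtain ⟨n', rfl⟩ : ∃ n', n = n' + 1 :=
      ⟨n - 1, (Nat.succ_pred_eq_of_pos (le_trans hm hmn)).symm⟩
    have hmn' : m' ≤ n' := by omega
    rw [hdesc m', hdesc n']
    constructor
    · rw [(key m').2.2.2, (key n').2.2.2]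
    · intro k hk1 hk2
      rw [Fintype.card_fin] at hk2
      rw [sumKLargest_of_antitone hk2 _ (key m').2.1,
        sumKLargest_of_antitone hk2 _ (key n').2.1]
      exact hmono2 k hk2 hmn'
  · -- convergence
    have hbdd : ∀ (k : ℕ) (hk : k ≤ dS) (n : ℕ), ∑ j : Fin k, P n (Fin.castLE hk j) ≤ 1 := by
      intro k hk n
      have h1 : ∑ j : Fin k, P n (Fin.castLE hk j)
          = ∑ x ∈ Finset.univ.map (Fin.castLEEmb hk), P n x := by
        rw [Finset.sum_map]; rfl
      rw [h1, ← (key n).2.2.2]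
      exact Finset.sum_le_sum_of_subset_of_nonneg (Finset.subset_univ _)
        (fun i _ _ => (key n).2.2.1 i)
    have hconv : ∀ (k : ℕ) (hk : k ≤ dS),
        ∃ l, Filter.Tendsto (fun n => ∑ j : Fin k, P n (Fin.castLE hk j))
          Filter.atTop (nhds l) := by
      intro k hk
      refine ⟨⨆ n, ∑ j : Fin k, P n (Fin.castLE hk j), ?_⟩
      apply tendsto_atTop_ciSup (hmono2 k hk)
      exact ⟨1, by rintro x ⟨n, rfl⟩; exact hbdd k hk n⟩
    have hsplit : ∀ (n : ℕ) (i : Fin dS),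
        P n i = (∑ j : Fin ((i : ℕ) + 1), P n (Fin.castLE i.isLt j))
          - ∑ j : Fin (i : ℕ), P n (Fin.castLE (le_of_lt i.isLt) j) := by
      intro n i
      rw [Fin.sum_univ_castSucc]
      have h1 : ∀ j : Fin (i : ℕ),
          Fin.castLE i.isLt (Fin.castSucc j) = Fin.castLE (le_of_lt i.isLt) j := by
        intro j; apply Fin.ext; rfl
      have h2 : Fin.castLE i.isLt (Fin.last (i : ℕ)) = i := by
        apply Fin.ext; rfl
      rw [h2]
      have h3 : ∑ j : Fin (i : ℕ), P n (Fin.castLE i.isLt (Fin.castSucc j))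
          = ∑ j : Fin (i : ℕ), P n (Fin.castLE (le_of_lt i.isLt) j) :=
        Finset.sum_congr rfl (fun j _ => by rw [h1])
      rw [h3]
      ring
    have hcoord : ∀ i : Fin dS, ∃ li, Filter.Tendsto (fun n => P n i) Filter.atTop (nhds li) := by
      intro i
      obtain ⟨a, ha⟩ := hconv ((i : ℕ) + 1) i.isLt
      obtain ⟨b, hb⟩ := hconv (i : ℕ) (le_of_lt i.isLt)
      refine ⟨a - b, ?_⟩
      have := ha.sub hb
      apply this.congr
      intro n
      exact (hsplit n i).symm
    choose L hL using hcoord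
    refine ⟨L, ?_⟩
    rw [tendsto_pi_nhds]
    intro i
    have hdiagentry : ∀ n : ℕ, (((Aopt τ)^[n + 1] ρ) i i).re = P n i := by
      intro n
      rw [(key n).1]
      simp [Matrix.diagonal_apply_eq]
    rw [← Filter.tendsto_add_atTop_iff_nat 1]
    apply (hL i).congr
    intro n
    exact (hdiagentry n).symm
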